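/- arXiv:2512.04882 — 6 statements merged into one kernel-verified Lean document; each statement's English description precedes it below -/
import Mathlib

section
/- Fix real numbers α > 0, β > 0, γ ≠ 0; set σ = sgn(γ) ∈ {−1, 1} and v = √(|γ|/β), and let f : ℝ → ℝ be differentiable. For every u ∈ ℝ, the vectors r₁ = (0, 0, v, 1), r₂ = (−σ, f'(u), 0, 0), r₃ = (0, 0, −v, 1), r₄ = (1, α, 0, 0) in ℝ⁴ satisfy A(u) r₁ = −v r₁, A(u) r₂ = 0, A(u) r₃ = v r₃ and A(u) r₄ = (f'(u) + σα) r₄. If moreover v > 0 and α > |f'(u)|, then r₁, r₂, r₃, r₄ are linearly independent, so A(u) is diagonalizable over ℝ. -/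
/-- The Jacobian of the flux of the first-order hyperbolic approximate system. -/
noncomputable def fluxJacobian (α σ v : ℝ) (f : ℝ → ℝ) (u : ℝ) : Matrix (Fin 4) (Fin 4) ℝ :=
  !![deriv f u,     σ,     0, 0;
     α * deriv f u, α * σ, 0, 0;
     0,             0,     0, -v ^ 2;
     0,             0,     -1, 0]

/-- the vectors `r₁ = (0,0,v,1)`, `r₂ = (-σ, f'(u),0,0)`, `r₃ = (0,0,-v,1)`,
`r₄ = (1,α,0,0)` are right eigenvectors of `A(u)` for the eigenvalues `-v, 0, v, f'(u)+σα`;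
if moreover `v > 0` and `α > |f'(u)|` they are linearly independent, hence `A(u)` is
diagonalizable over `ℝ`. -/
theorem right_eigenvectors_of_fluxJacobian
    (α β γ σ v : ℝ) (hα : 0 < α) (hβ : 0 < β) (hγ : γ ≠ 0)
    (hσ : σ = Real.sign γ) (hv : v = Real.sqrt (|γ| / β))
    (f : ℝ → ℝ) (hf : Differentiable ℝ f) (u : ℝ) :
    (fluxJacobian α σ v f u).mulVec ![0, 0, v, 1] = (-v) • ![0, 0, v, 1] ∧
    (fluxJacobian α σ v f u).mulVec ![-σ, deriv f u, 0, 0] = 0 ∧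
    (fluxJacobian α σ v f u).mulVec ![0, 0, -v, 1] = v • ![0, 0, -v, 1] ∧
    (fluxJacobian α σ v f u).mulVec ![1, α, 0, 0]
        = (deriv f u + σ * α) • ![1, α, 0, 0] ∧
    (0 < v → |deriv f u| < α →
      LinearIndependent ℝ
        ![(![0, 0, v, 1] : Fin 4 → ℝ), ![-σ, deriv f u, 0, 0], ![0, 0, -v, 1], ![1, α, 0, 0]] ∧
      ∃ (P : Matrix (Fin 4) (Fin 4) ℝ) (d : Fin 4 → ℝ),
        IsUnit P.det ∧ fluxJacobian α σ v f u = P * Matrix.diagonal d * P⁻¹) := by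
  have hσ1 : σ = 1 ∨ σ = -1 := by
    rcases lt_or_gt_of_ne hγ with h | h
    · right; rw [hσ, Real.sign_of_neg h]
    · left; rw [hσ, Real.sign_of_pos h]
  have hσsq : σ * σ = 1 := by rcases hσ1 with h | h <;> rw [h] <;> ring
  refine ⟨?_, ?_, ?_, ?_, ?_⟩
  · funext i
    fin_cases i <;>
      simp [fluxJacobian, Matrix.mulVec, dotProduct, Fin.sum_univ_four] <;> ring
  · funext i
    fin_cases i <;>
      simp [fluxJacobian, Matrix.mulVec, dotProduct, Fin.sum_univ_four] <;> ring
  · funext i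
    fin_cases i <;>
      simp [fluxJacobian, Matrix.mulVec, dotProduct, Fin.sum_univ_four] <;> ring
  · funext i
    fin_cases i <;>
      simp [fluxJacobian, Matrix.mulVec, dotProduct, Fin.sum_univ_four] <;> ring
  · intro hv0 hfα
    set M : Matrix (Fin 4) (Fin 4) ℝ :=
      !![0, 0, v, 1; -σ, deriv f u, 0, 0; 0, 0, -v, 1; 1, α, 0, 0] with hM
    have hdet : M.det = 2 * v * (σ * α + deriv f u) := by
      simp [hM, Matrix.det_succ_row_zero, Fin.sum_univ_succ, Fin.succAbove, Fin.castSucc, Fin.castAdd, Fin.castLE]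
      norm_num
      ring
    have hne : σ * α + deriv f u ≠ 0 := by
      intro h0
      have hd : deriv f u = -(σ * α) := by linarith
      have : |deriv f u| = α := by
        rw [hd, abs_neg, abs_mul]
        rcases hσ1 with h | h <;> rw [h] <;> simp [abs_of_pos hα]
      linarith [hfα]
    have hdet0 : M.det ≠ 0 := by
      rw [hdet]
      exact mul_ne_zero (mul_ne_zero (by norm_num) (ne_of_gt hv0)) hne
    have hunit : IsUnit M := by
      rw [Matrix.isUnit_iff_isUnit_det]; exact isUnit_iff_ne_zero.2 hdet0
    constructor
    · exact Matrix.linearIndependent_rows_iff_isUnit.2 hunit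
    · refine ⟨M.transpose, ![-v, 0, v, deriv f u + σ * α], ?_, ?_⟩
      · rw [Matrix.det_transpose]
        exact isUnit_iff_ne_zero.2 hdet0
      · have hPdet : M.transpose.det ≠ 0 := by rwa [Matrix.det_transpose]
        have key : fluxJacobian α σ v f u * M.transpose
            = M.transpose * Matrix.diagonal ![-v, 0, v, deriv f u + σ * α] := by
          ext i j
          fin_cases i <;> fin_cases j <;>
            simp [fluxJacobian, hM, Matrix.mul_apply, Matrix.diagonal, Matrix.transpose_apply,
              Fin.sum_univ_four, Matrix.vecHead, Matrix.vecTail] <;> ring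
        calc fluxJacobian α σ v f u
            = fluxJacobian α σ v f u * (M.transpose * M.transpose⁻¹) := by
              rw [Matrix.mul_nonsing_inv _ (isUnit_iff_ne_zero.2 hPdet), Matrix.mul_one]
          _ = (fluxJacobian α σ v f u * M.transpose) * M.transpose⁻¹ := by rw [Matrix.mul_assoc]
          _ = M.transpose * Matrix.diagonal ![-v, 0, v, deriv f u + σ * α] * M.transpose⁻¹ := by rw [key]
end

section
/- Fix real numbers α > 0, β > 0, γ ≠ 0; set σ = sgn(γ) ∈ {−1, 1} and v = √(|γ|/β), and let f : ℝ → ℝ be differentiable. Define the Riemann invariants R₁(u,ψ,w,p) = w + v p, R₂(u,ψ,w,p) = α u − ψ, R₃(u,ψ,w,p) = w − v p, R₄(u,ψ,w,p) = σ f(u) + ψ on ℝ⁴. Then for every U = (u,ψ,w,p) ∈ ℝ⁴ and each i ∈ {1,2,3,4}, the gradient ∇Rᵢ(U) is a left eigenvector of A(u) for the eigenvalue λᵢ, where λ₁ = −v, λ₂ = 0, λ₃ = v, λ₄ = f'(u) + σα; explicitly, the row vectors (0,0,1,v), (α,−1,0,0), (0,0,1,−v), (σ f'(u),1,0,0) satisfy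 ℓᵢ A(u) = λᵢ ℓᵢ. -/
/-- the gradients of the Riemann invariants `R₁ = w + v p`, `R₂ = α u - ψ`,
`R₃ = w - v p`, `R₄ = σ f(u) + ψ`, i.e. the row vectors `(0,0,1,v)`, `(α,-1,0,0)`,
`(0,0,1,-v)`, `(σ f'(u),1,0,0)`, are left eigenvectors of `A(u)` for the eigenvalues
`λ₁ = -v`, `λ₂ = 0`, `λ₃ = v`, `λ₄ = f'(u) + σα`: they are nonzero and satisfy
`ℓᵢ A(u) = λᵢ ℓᵢ`. -/
theorem left_eigenvectors_of_fluxJacobian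
    (α β γ σ v : ℝ) (hα : 0 < α) (hβ : 0 < β) (hγ : γ ≠ 0)
    (hσ : σ = Real.sign γ) (hv : v = Real.sqrt (|γ| / β))
    (f : ℝ → ℝ) (hf : Differentiable ℝ f) (u ψ w p : ℝ) :
    (![0, 0, 1, v] : Fin 4 → ℝ) ≠ 0 ∧
      Matrix.vecMul ![0, 0, 1, v] (fluxJacobian α σ v f u) = (-v) • ![0, 0, 1, v] ∧
    (![α, -1, 0, 0] : Fin 4 → ℝ) ≠ 0 ∧
      Matrix.vecMul ![α, -1, 0, 0] (fluxJacobian α σ v f u) = (0 : ℝ) • ![α, -1, 0, 0] ∧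
    (![0, 0, 1, -v] : Fin 4 → ℝ) ≠ 0 ∧
      Matrix.vecMul ![0, 0, 1, -v] (fluxJacobian α σ v f u) = v • ![0, 0, 1, -v] ∧
    (![σ * deriv f u, 1, 0, 0] : Fin 4 → ℝ) ≠ 0 ∧
      Matrix.vecMul ![σ * deriv f u, 1, 0, 0] (fluxJacobian α σ v f u)
        = (deriv f u + σ * α) • ![σ * deriv f u, 1, 0, 0] := by
  have hσ2' : σ ^ 2 = 1 := by
    rcases Real.sign_apply_eq_of_ne_zero γ hγ with h | h <;> rw [hσ, h] <;> norm_num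
  have hσ2 : σ * σ = 1 := by
    rcases Real.sign_apply_eq_of_ne_zero γ hγ with h | h <;> rw [hσ, h] <;> norm_num
  refine ⟨?_, ?_, ?_, ?_, ?_, ?_, ?_, ?_⟩
  · intro h; have := congrFun h 2; simp at this
  · funext i; fin_cases i <;>
      simp [fluxJacobian, Matrix.vecMul, dotProduct, Fin.sum_univ_four, Pi.smul_apply, smul_eq_mul, Matrix.vecHead, Matrix.vecTail] <;> ring
  · intro h; have := congrFun h 0; simp at this; linarith
  · funext i; fin_cases i <;>
      simp [fluxJacobian, Matrix.vecMul, dotProduct, Fin.sum_univ_four, Pi.smul_apply, smul_eq_mul, Matrix.vecHead, Matrix.vecTail] <;> ring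
  · intro h; have := congrFun h 2; simp at this
  · funext i; fin_cases i <;>
      simp [fluxJacobian, Matrix.vecMul, dotProduct, Fin.sum_univ_four, Pi.smul_apply, smul_eq_mul, Matrix.vecHead, Matrix.vecTail] <;> ring
  · intro h; have := congrFun h 1; simp at this
  · funext i; fin_cases i <;>
      simp [fluxJacobian, Matrix.vecMul, dotProduct, Fin.sum_univ_four, Pi.smul_apply, smul_eq_mul, Matrix.vecHead, Matrix.vecTail] <;>
      ring_nf <;> rw [hσ2'] <;> ring
end

section
/- Fix real numbers α > 0, β > 0, γ ≠ 0; set σ = sgn(γ) ∈ {−1, 1} and v = √(|γ|/β). Let f : ℝ → ℝ be C¹ and let u : ℝ × ℝ → ℝ be four times continuously differentiable satisfying pointwise the dispersive equation ∂_t u + ∂_x(f(u)) = γ ∂_x³ u. Define U = (u, ψ, w, p) with ψ = −|γ| ∂_x² u, w = ∂_t u, p = ∂_x u. Then U satisfies pointwise the hyperbolic approximate system up to explicit residual terms: ∂_t u + ∂_x(f(u) + σψ) = 0; ∂_t ψ + α ∂_x(f(u) + σψ) = −α w − |γ| ∂_t ∂_x² u; β ∂_t w − |γ| ∂_x p = ψ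 + β ∂_t² u; ∂_t p − ∂_x w = 0. -/
/-- Partial derivative in the first (spatial) variable. -/
noncomputable def pdx (g : ℝ → ℝ → ℝ) (x t : ℝ) : ℝ := deriv (fun y => g y t) x

/-- Partial derivative in the second (temporal) variable. -/
noncomputable def pdt (g : ℝ → ℝ → ℝ) (x t : ℝ) : ℝ := deriv (fun s => g x s) t

open Function

private lemma hasDerivAt_slice_x {g : ℝ → ℝ → ℝ} {x t : ℝ}
    (hg : DifferentiableAt ℝ (uncurry g) (x, t)) :
    HasDerivAt (fun y => g y t) (fderiv ℝ (uncurry g) (x, t) (1, 0)) x := by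
  have h1 : HasDerivAt (fun y : ℝ => (y, t)) ((1 : ℝ), (0 : ℝ)) x :=
    HasDerivAt.prodMk (hasDerivAt_id x) (hasDerivAt_const x t)
  exact hg.hasFDerivAt.comp_hasDerivAt x h1

private lemma hasDerivAt_slice_t {g : ℝ → ℝ → ℝ} {x t : ℝ}
    (hg : DifferentiableAt ℝ (uncurry g) (x, t)) :
    HasDerivAt (fun s => g x s) (fderiv ℝ (uncurry g) (x, t) (0, 1)) t := by
  have h1 : HasDerivAt (fun s : ℝ => (x, s)) ((0 : ℝ), (1 : ℝ)) t :=
    HasDerivAt.prodMk (hasDerivAt_const t x) (hasDerivAt_id t)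
  exact hg.hasFDerivAt.comp_hasDerivAt t h1

private lemma pdx_eq_fderiv {g : ℝ → ℝ → ℝ} {x t : ℝ}
    (hg : DifferentiableAt ℝ (uncurry g) (x, t)) :
    pdx g x t = fderiv ℝ (uncurry g) (x, t) (1, 0) :=
  (hasDerivAt_slice_x hg).deriv

private lemma pdt_eq_fderiv {g : ℝ → ℝ → ℝ} {x t : ℝ}
    (hg : DifferentiableAt ℝ (uncurry g) (x, t)) :
    pdt g x t = fderiv ℝ (uncurry g) (x, t) (0, 1) :=
  (hasDerivAt_slice_t hg).deriv

private lemma uncurry_pdx {g : ℝ → ℝ → ℝ}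
    (hg : Differentiable ℝ (uncurry g)) :
    uncurry (pdx g) = fun p : ℝ × ℝ => fderiv ℝ (uncurry g) p (1, 0) := by
  funext p
  exact pdx_eq_fderiv (x := p.1) (t := p.2) (hg (p.1, p.2))

private lemma contDiff_uncurry_pdx {g : ℝ → ℝ → ℝ} {n : ℕ}
    (hg : ContDiff ℝ (n + 1) (uncurry g)) :
    ContDiff ℝ n (uncurry (pdx g)) := by
  rw [uncurry_pdx (hg.differentiable (by simp))]
  exact (hg.fderiv_right (by exact_mod_cast le_refl _)).clm_apply contDiff_const

private lemma sign_mul_abs' {γ : ℝ} (hγ : γ ≠ 0) : Real.sign γ * |γ| = γ := by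
  rcases hγ.lt_or_gt with h | h
  · rw [Real.sign_of_neg h, abs_of_neg h]; ring
  · rw [Real.sign_of_pos h, abs_of_pos h]; ring

/-- a `C⁴` solution `u` of the dispersive equation `u_t + f(u)_x = γ u_xxx`
induces, via `ψ = -|γ| u_xx`, `w = u_t`, `p = u_x`, a solution of the hyperbolic
approximate system up to the explicit residual terms `-|γ| ∂ₜ∂ₓ²u` and `β ∂ₜ²u`. -/
theorem dispersive_solution_satisfies_approximate_system_with_residuals
    (α β γ σ v : ℝ) (hα : 0 < α) (hβ : 0 < β) (hγ : γ ≠ 0)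
    (hσ : σ = Real.sign γ) (hv : v = Real.sqrt (|γ| / β))
    (f : ℝ → ℝ) (hf : ContDiff ℝ 1 f)
    (u : ℝ → ℝ → ℝ) (hu : ContDiff ℝ 4 (Function.uncurry u))
    (hpde : ∀ x t, pdt u x t + pdx (fun y s => f (u y s)) x t
      = γ * pdx (pdx (pdx u)) x t) :
    (∀ x t, pdt u x t
        + pdx (fun y s => f (u y s) + σ * (-(|γ| * pdx (pdx u) y s))) x t = 0) ∧
    (∀ x t, pdt (fun y s => -(|γ| * pdx (pdx u) y s)) x t
        + α * pdx (fun y s => f (u y s) + σ * (-(|γ| * pdx (pdx u) y s))) x t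
        = -(α * pdt u x t) - |γ| * pdt (pdx (pdx u)) x t) ∧
    (∀ x t, β * pdt (pdt u) x t - |γ| * pdx (pdx u) x t
        = -(|γ| * pdx (pdx u) x t) + β * pdt (pdt u) x t) ∧
    (∀ x t, pdt (pdx u) x t - pdx (pdt u) x t = 0) := by
  have hσγ : σ * |γ| = γ := by rw [hσ]; exact sign_mul_abs' hγ
  -- smoothness of iterated x-derivatives
  have hu3 : ContDiff ℝ 3 (uncurry (pdx u)) :=
    contDiff_uncurry_pdx (n := 3) (by exact_mod_cast hu)
  have hu2 : ContDiff ℝ 2 (uncurry (pdx (pdx u))) :=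
    contDiff_uncurry_pdx (n := 2) (by exact_mod_cast hu3)
  have huD : Differentiable ℝ (uncurry u) := hu.differentiable (by norm_num)
  have hu2D : Differentiable ℝ (uncurry (pdx (pdx u))) :=
    hu2.differentiable (by norm_num)
  have hfu : Differentiable ℝ (uncurry (fun y s => f (u y s))) := by
    have : uncurry (fun y s => f (u y s)) = f ∘ uncurry u := rfl
    rw [this]
    exact (hf.differentiable one_ne_zero).comp huD
  -- key computation: the first equation
  have key : ∀ x t,
      pdx (fun y s => f (u y s) + σ * (-(|γ| * pdx (pdx u) y s))) x t
        = pdx (fun y s => f (u y s)) x t - γ * pdx (pdx (pdx u)) x t := by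
    intro x t
    have h1 : DifferentiableAt ℝ (fun y => f (u y t)) x :=
      (hasDerivAt_slice_x (g := fun y s => f (u y s)) (hfu (x, t))).differentiableAt
    have h2 : HasDerivAt (fun y => pdx (pdx u) y t)
        (pdx (pdx (pdx u)) x t) x := by
      have := hasDerivAt_slice_x (g := pdx (pdx u)) (hu2D (x, t))
      rwa [← pdx_eq_fderiv (hu2D (x, t))] at this
    have h3 : HasDerivAt (fun y => σ * (-(|γ| * pdx (pdx u) y t)))
        (σ * -(|γ| * pdx (pdx (pdx u)) x t)) x :=
      ((h2.const_mul (|γ|)).neg).const_mul σ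
    show deriv (fun y => f (u y t) + σ * (-(|γ| * pdx (pdx u) y t))) x
        = deriv (fun y => f (u y t)) x - γ * pdx (pdx (pdx u)) x t
    rw [deriv_fun_add h1 h3.differentiableAt, h3.deriv]
    linear_combination (-(pdx (pdx (pdx u)) x t)) * hσγ
  refine ⟨?_, ?_, ?_, ?_⟩
  · intro x t
    rw [key x t]
    have := hpde x t
    linarith
  · intro x t
    have hψ : pdt (fun y s => -(|γ| * pdx (pdx u) y s)) x t
        = -(|γ| * pdt (pdx (pdx u)) x t) := by
      unfold pdt
      have h2 : DifferentiableAt ℝ (fun s => pdx (pdx u) x s) t :=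
        (hasDerivAt_slice_t (g := pdx (pdx u)) (hu2D (x, t))).differentiableAt
      rw [deriv.fun_neg, deriv_const_mul _ h2]
    rw [hψ, key x t]
    have h := hpde x t
    have hfx : pdx (fun y s => f (u y s)) x t
        = γ * pdx (pdx (pdx u)) x t - pdt u x t := by linarith
    rw [hfx]; ring
  · intro x t; ring
  · intro x t
    -- symmetry of second derivatives
    set F := uncurry u with hF
    have hF1 : ContDiff ℝ 3 (fderiv ℝ F) := hu.fderiv_right (by norm_num)
    have hF1D : Differentiable ℝ (fderiv ℝ F) := hF1.differentiable (by norm_num)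
    have hsymm := second_derivative_symmetric (f := F) (f' := fderiv ℝ F)
      (f'' := fderiv ℝ (fderiv ℝ F) (x, t)) (x := (x, t))
      (fun y => (huD y).hasFDerivAt) (hF1D (x, t)).hasFDerivAt
    -- pdt (pdx u) x t = f'' (0,1) (1,0)
    have e1 : pdt (pdx u) x t = fderiv ℝ (fderiv ℝ F) (x, t) (0, 1) (1, 0) := by
      have hcurve : HasDerivAt (fun s : ℝ => (x, s)) ((0 : ℝ), (1 : ℝ)) t :=
        HasDerivAt.prodMk (hasDerivAt_const t x) (hasDerivAt_id t)
      have hcomp : HasDerivAt (fun s => fderiv ℝ F (x, s))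
          (fderiv ℝ (fderiv ℝ F) (x, t) (0, 1)) t :=
        (hF1D (x, t)).hasFDerivAt.comp_hasDerivAt t hcurve
      have happ : HasDerivAt (fun s => fderiv ℝ F (x, s) (1, 0))
          (fderiv ℝ (fderiv ℝ F) (x, t) (0, 1) (1, 0)) t := by
        have L := (ContinuousLinearMap.apply ℝ ℝ ((1 : ℝ), (0 : ℝ))).hasFDerivAt
          (x := fderiv ℝ F (x, t))
        exact L.comp_hasDerivAt t hcomp
      have : (fun s => pdx u x s) = fun s => fderiv ℝ F (x, s) (1, 0) := by
        funext s
        exact pdx_eq_fderiv (huD (x, s))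
      unfold pdt
      rw [this, happ.deriv]
    have e2 : pdx (pdt u) x t = fderiv ℝ (fderiv ℝ F) (x, t) (1, 0) (0, 1) := by
      have hcurve : HasDerivAt (fun y : ℝ => (y, t)) ((1 : ℝ), (0 : ℝ)) x :=
        HasDerivAt.prodMk (hasDerivAt_id x) (hasDerivAt_const x t)
      have hcomp : HasDerivAt (fun y => fderiv ℝ F (y, t))
          (fderiv ℝ (fderiv ℝ F) (x, t) (1, 0)) x :=
        (hF1D (x, t)).hasFDerivAt.comp_hasDerivAt x hcurve
      have happ : HasDerivAt (fun y => fderiv ℝ F (y, t) (0, 1))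
          (fderiv ℝ (fderiv ℝ F) (x, t) (1, 0) (0, 1)) x := by
        have L := (ContinuousLinearMap.apply ℝ ℝ ((0 : ℝ), (1 : ℝ))).hasFDerivAt
          (x := fderiv ℝ F (x, t))
        exact L.comp_hasDerivAt x hcomp
      have : (fun y => pdt u y t) = fun y => fderiv ℝ F (y, t) (0, 1) := by
        funext y
        exact pdt_eq_fderiv (huD (y, t))
      unfold pdx
      rw [this, happ.deriv]
    rw [e1, e2, hsymm (0, 1) (1, 0), sub_self]
end

section
/- Fix real numbers α > 0, β > 0, γ ≠ 0; set σ = sgn(γ) ∈ {−1, 1} and v = √(|γ|/β). Let f : ℝ → ℝ be differentiable. For every U = (u, ψ, w, p) ∈ ℝ⁴, the matrix product S₀(u) A(u) is a symmetric 4×4 matrix, where S₀(u) = diag(σ f'(u), 1/α, β, |γ|) is the Hessian of the entropy E^α at U and A(u) is the flux Jacobian; explicitly, S₀(u) A(u) has rows (σ f'(u)², f'(u), 0, 0), (f'(u), σ, 0, 0), (0, 0, 0, −|γ|), (0, 0, −|γ|, 0). In particular, the Hessian of the entropy symmetrizes the hyperbolic approximate system. -/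
/-- the Hessian `S₀(u) = diag(σ f'(u), 1/α, β, |γ|)` of the entropy
symmetrizes the hyperbolic approximate system: `S₀(u) A(u)` is symmetric, with rows
`(σ f'(u)², f'(u), 0, 0)`, `(f'(u), σ, 0, 0)`, `(0, 0, 0, -|γ|)`, `(0, 0, -|γ|, 0)`. -/
theorem entropy_hessian_symmetrizes
    (α β γ σ v : ℝ) (hα : 0 < α) (hβ : 0 < β) (hγ : γ ≠ 0)
    (hσ : σ = Real.sign γ) (hv : v = Real.sqrt (|γ| / β))
    (f : ℝ → ℝ) (hf : Differentiable ℝ f) (u ψ w p : ℝ) :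
    (Matrix.diagonal ![σ * deriv f u, 1 / α, β, |γ|] * fluxJacobian α σ v f u).IsSymm ∧
    Matrix.diagonal ![σ * deriv f u, 1 / α, β, |γ|] * fluxJacobian α σ v f u
      = !![σ * (deriv f u) ^ 2, deriv f u, 0, 0;
           deriv f u,           σ,         0, 0;
           0,                   0,         0, -|γ|;
           0,                   0,         -|γ|, 0] := by
  have hv2 : v ^ 2 = |γ| / β := by
    rw [hv, Real.sq_sqrt (by positivity)]
  have hσ2 : σ ^ 2 = 1 := by
    rw [hσ]
    rcases hγ.lt_or_gt with h | h
    · simp [Real.sign_of_neg h]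
    · simp [Real.sign_of_pos h]
  have heq : Matrix.diagonal ![σ * deriv f u, 1 / α, β, |γ|] * fluxJacobian α σ v f u
      = !![σ * (deriv f u) ^ 2, deriv f u, 0, 0;
           deriv f u,           σ,         0, 0;
           0,                   0,         0, -|γ|;
           0,                   0,         -|γ|, 0] := by
    ext i j
    fin_cases i <;> fin_cases j <;>
      simp [fluxJacobian, Matrix.mul_apply, Fin.sum_univ_four, Matrix.diagonal,
        Matrix.vecHead, Matrix.vecTail]
    all_goals try ring
    all_goals try linear_combination (deriv f u) * hσ2
    all_goals try linear_combination σ * hσ2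
    all_goals try rw [hv2]
    all_goals try field_simp [hα.ne', hβ.ne']
    all_goals try linear_combination hσ2
  refine ⟨?_, heq⟩
  rw [heq]
  ext i j
  fin_cases i <;> fin_cases j <;> simp [Matrix.IsSymm, Matrix.vecHead, Matrix.vecTail]
end

section
/- Fix real numbers α > 0, γ ≠ 0, ε > 0; set σ = sgn(γ) ∈ {−1, 1}. Let f : ℝ → ℝ be differentiable and let u ∈ ℝ with f'(u) ≠ 0. Define the 4×4 real matrices S₁(u) with rows (σ f'(u)², f'(u), 0, 0), (f'(u), σ, 0, 0), (0, 0, 0, −|γ|), (0, 0, −|γ|, 0), and S₂(u) = diag(ε σ f'(u), ε/α, 0, ε |γ|). Then (i) the kernel of S₂(u) equals the span of e₃ = (0,0,1,0); and (ii) for every λ ∈ ℝ and every x ∈ ℝ⁴, if S₂(u) x = 0 and S₁(u) x = λ x then x = 0; i.e., no eigenvector of S₁(u) lies in the kernel of S₂(u) (the Shizuta–Kawashima coupling condition). -/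
/-- with `S₁(u)` the symmetrized flux matrix and
`S₂(u) = diag(ε σ f'(u), ε/α, 0, ε|γ|)` the symmetrized diffusion matrix, and `f'(u) ≠ 0`:
(i) the kernel of `S₂(u)` is exactly the span of `e₃ = (0,0,1,0)`; and
(ii) no eigenvector of `S₁(u)` lies in the kernel of `S₂(u)` (Shizuta–Kawashima). -/
theorem shizuta_kawashima_condition
    (α γ ε σ : ℝ) (hα : 0 < α) (hγ : γ ≠ 0) (hε : 0 < ε)
    (hσ : σ = Real.sign γ)
    (f : ℝ → ℝ) (hf : Differentiable ℝ f) (u : ℝ) (hfu : deriv f u ≠ 0) :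
    (∀ x : Fin 4 → ℝ,
      (Matrix.diagonal ![ε * (σ * deriv f u), ε / α, 0, ε * |γ|]).mulVec x = 0 ↔
        ∃ c : ℝ, x = c • ![0, 0, 1, 0]) ∧
    (∀ (lam : ℝ) (x : Fin 4 → ℝ),
      (Matrix.diagonal ![ε * (σ * deriv f u), ε / α, 0, ε * |γ|]).mulVec x = 0 →
      (!![σ * (deriv f u) ^ 2, deriv f u, 0, 0;
          deriv f u,           σ,         0, 0;
          0,                   0,         0, -|γ|;
          0,                   0,         -|γ|, 0] : Matrix (Fin 4) (Fin 4) ℝ).mulVec x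
        = lam • x →
      x = 0) := by
  have hσ0 : σ ≠ 0 := by
    simp [hσ, Real.sign_eq_zero_iff, hγ]
  have h0 : ε * (σ * deriv f u) ≠ 0 :=
    mul_ne_zero hε.ne' (mul_ne_zero hσ0 hfu)
  have h1 : ε / α ≠ 0 := div_ne_zero hε.ne' hα.ne'
  have hg : |γ| ≠ 0 := abs_ne_zero.mpr hγ
  have h3 : ε * |γ| ≠ 0 := mul_ne_zero hε.ne' hg
  have key : ∀ x : Fin 4 → ℝ,
      (Matrix.diagonal ![ε * (σ * deriv f u), ε / α, 0, ε * |γ|]).mulVec x = 0 →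
      x 0 = 0 ∧ x 1 = 0 ∧ x 3 = 0 := by
    intro x hx
    have e0 := congrFun hx 0
    have e1 := congrFun hx 1
    have e3 := congrFun hx 3
    simp [Matrix.mulVec_diagonal] at e0 e1 e3
    have hε' : ε ≠ 0 := hε.ne'
    have hα' : α ≠ 0 := hα.ne'
    refine ⟨by tauto, by tauto, by tauto⟩
  constructor
  · intro x
    constructor
    · intro hx
      obtain ⟨a0, a1, a3⟩ := key x hx
      refine ⟨x 2, ?_⟩
      funext i
      fin_cases i <;> simp [a0, a1, a3]
    · rintro ⟨c, rfl⟩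
      funext i
      fin_cases i <;> simp [Matrix.mulVec_diagonal]
  · intro lam x hx hev
    obtain ⟨a0, a1, a3⟩ := key x hx
    have e3 := congrFun hev 3
    simp [Matrix.mulVec, dotProduct, Fin.sum_univ_four, a0, a1, a3] at e3
    have a2 : x 2 = 0 := by
      tauto
    funext i
    fin_cases i <;> simp [a0, a1, a2, a3]
end

section
/- Fix real numbers α > 0, β > 0, γ ≠ 0; set σ = sgn(γ) ∈ {−1, 1} and v = √(|γ|/β). Let f : ℝ → ℝ be differentiable. Define the flux map 𝐟(u, ψ, w, p) = (f(u) + σψ, α(f(u) + σψ), −v² p, −w) on ℝ⁴. Then for all U = (u₁, ψ₁, w₁, p₁) and V = (u₂, ψ₂, w₂, p₂) in ℝ⁴, the vector identity ∇²E^α(V) · (𝐟(U) − 𝐟(V) − A(u₂)(U − V)) = (f(u₁) − f(u₂) − f'(u₂)(u₁ − u₂)) · (σ f'(u₂), 1, 0, 0)ᵀ holds, where ∇²E^α(V) = diag(σ f'(u₂), 1/α, β, |γ|) and A(u₂) is the flux Jacobian at u₂. -/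
/-- The flux map of the first-order hyperbolic approximate system. -/
noncomputable def fluxMap (α σ v : ℝ) (f : ℝ → ℝ) (U : Fin 4 → ℝ) : Fin 4 → ℝ :=
  ![f (U 0) + σ * U 1, α * (f (U 0) + σ * U 1), -v ^ 2 * U 3, -U 2]

/-- the quadratic flux remainder identity
`∇²E^α(V) (𝐟(U) − 𝐟(V) − A(u₂)(U − V))
  = (f(u₁) − f(u₂) − f'(u₂)(u₁ − u₂)) (σ f'(u₂), 1, 0, 0)ᵀ`. -/
theorem relative_flux_remainder_identity
    (α β γ σ v : ℝ) (hα : 0 < α) (hβ : 0 < β) (hγ : γ ≠ 0)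
    (hσ : σ = Real.sign γ) (hv : v = Real.sqrt (|γ| / β))
    (f : ℝ → ℝ) (hf : Differentiable ℝ f)
    (u₁ ψ₁ w₁ p₁ u₂ ψ₂ w₂ p₂ : ℝ) :
    (Matrix.diagonal ![σ * deriv f u₂, 1 / α, β, |γ|]).mulVec
        (fluxMap α σ v f ![u₁, ψ₁, w₁, p₁] - fluxMap α σ v f ![u₂, ψ₂, w₂, p₂]
          - (fluxJacobian α σ v f u₂).mulVec (![u₁, ψ₁, w₁, p₁] - ![u₂, ψ₂, w₂, p₂]))
      = (f u₁ - f u₂ - deriv f u₂ * (u₁ - u₂)) • ![σ * deriv f u₂, 1, 0, 0] := by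
  have hα' : α ≠ 0 := hα.ne'
  funext i
  fin_cases i <;>
    simp [fluxMap, fluxJacobian, Matrix.mulVec, Matrix.diagonal, dotProduct,
      Fin.sum_univ_four, hα']
  · ring
  · rw [inv_mul_eq_div, div_eq_iff hα']; ring
  · exact Or.inr (by ring)
  · exact Or.inr (by ring)
end
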